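/- Let T be a θ-invariant triangulation of the (2n+2)-gon with unique diameter d = {v, v+n+1}. The restriction map, which identifies all vertices strictly on one side of d to a single vertex ∗, sends the diagonals of T (other than the identified boundary) to a triangulation of an (n+3)-gon; in particular, the n θ-orbits of diagonals of T map to n pairwise non-crossing diagonals of the (n+3)-gon. -/

import Mathlib

/-- The 180° rotation on the vertices `ZMod (2n+2)` of the regular `(2n+2)`-gon. -/
def theta (n : ℕ) (a : ZMod (2 * n + 2)) : ZMod (2 * n + 2) :=
  a + ((n + 1 : ℕ) : ZMod (2 * n + 2))

/-- A diagonal of the `m`-gon: an unordered pair of distinct, non-adjacent vertices. -/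
def IsDiagonal (m : ℕ) (p : Sym2 (ZMod m)) : Prop :=
  ∃ a b : ZMod m, p = s(a, b) ∧ a ≠ b ∧ b ≠ a + 1 ∧ a ≠ b + 1

/-- `x` lies strictly between `a` and `b` in cyclic (counterclockwise) order. -/
def StrictBtw (m : ℕ) (a x b : ZMod m) : Prop :=
  0 < (x - a).val ∧ (x - a).val < (b - a).val

/-- Two chords cross: their endpoint pairs strictly separate each other in cyclic order. -/
def Cross (m : ℕ) (p q : Sym2 (ZMod m)) : Prop :=
  ∃ x y z w : ZMod m, p = s(x, y) ∧ q = s(z, w) ∧ StrictBtw m x z y ∧ StrictBtw m y w x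

/-- The restriction map associated to the oriented diameter `{v, v+n+1}`: the vertices
`v, v+1, …, v+n+1` are sent to `0, 1, …, n+1` of the `(n+3)`-gon, and all vertices strictly
on the right of the diameter are identified to the single vertex `∗ = n+2`. -/
def res (n : ℕ) (v a : ZMod (2 * n + 2)) : ZMod (n + 3) :=
  if (a - v).val ≤ n + 1 then (((a - v).val : ℕ) : ZMod (n + 3))
  else ((n + 2 : ℕ) : ZMod (n + 3))

lemma isDiagonal_pair {m : ℕ} (x y : ZMod m) :
    IsDiagonal m s(x, y) ↔ x ≠ y ∧ y ≠ x + 1 ∧ x ≠ y + 1 := by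
  constructor
  · rintro ⟨a, b, hab, h1, h2, h3⟩
    rcases Sym2.eq_iff.mp hab with ⟨rfl, rfl⟩ | ⟨rfl, rfl⟩
    · exact ⟨h1, h2, h3⟩
    · exact ⟨h1.symm, h3, h2⟩
  · rintro ⟨h1, h2, h3⟩
    exact ⟨x, y, rfl, h1, h2, h3⟩

lemma zsub_val {m : ℕ} [NeZero m] (x y : ZMod m) :
    (y - x).val = (m + y.val - x.val) % m := by
  have hx : x.val ≤ m := (ZMod.val_lt x).le
  have h : (m + y.val - x.val : ℕ) + x.val = m + y.val := by omega
  have h2 := congrArg (fun t : ℕ => (t : ZMod m)) h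
  simp only [Nat.cast_add, ZMod.natCast_self, ZMod.natCast_zmod_val, zero_add] at h2
  rw [← eq_sub_of_add_eq h2, ZMod.val_natCast]

lemma modh {m i k : ℕ} (hi : i < m) (hk : k < m) :
    (m + k - i) % m = if i ≤ k then k - i else m + k - i := by
  split_ifs with h
  · have h2 : m + k - i = (k - i) + m * 1 := by omega
    rw [h2, Nat.add_mul_mod_self_left, Nat.mod_eq_of_lt (by omega)]
  · exact Nat.mod_eq_of_lt (by omega)

/-- The restriction of a `θ`-invariant triangulation `T` of the `(2n+2)`-gon with diameter
`{v, v+n+1}`: the images of the diagonals of `T` which are genuine diagonals of the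
`(n+3)`-gon form a set of `n` pairwise non-crossing diagonals, i.e. a triangulation. -/
theorem stmt15 (n : ℕ) (hn : 1 ≤ n) (T : Finset (Sym2 (ZMod (2 * n + 2))))
    (hdiag : ∀ p ∈ T, IsDiagonal (2 * n + 2) p)
    (hnc : ∀ p ∈ T, ∀ q ∈ T, p ≠ q → ¬ Cross (2 * n + 2) p q)
    (hcard : T.card = 2 * n - 1)
    (hinv : T.image (Sym2.map (theta n)) = T)
    (v : ZMod (2 * n + 2))
    (hv : s(v, v + ((n + 1 : ℕ) : ZMod (2 * n + 2))) ∈ T) :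
    (∀ p ∈ {q : Sym2 (ZMod (n + 3)) |
        (∃ τ ∈ T, q = Sym2.map (res n v) τ) ∧ IsDiagonal (n + 3) q},
      ∀ q ∈ {q : Sym2 (ZMod (n + 3)) |
        (∃ τ ∈ T, q = Sym2.map (res n v) τ) ∧ IsDiagonal (n + 3) q},
      p ≠ q → ¬ Cross (n + 3) p q) ∧
    {q : Sym2 (ZMod (n + 3)) |
      (∃ τ ∈ T, q = Sym2.map (res n v) τ) ∧ IsDiagonal (n + 3) q}.ncard = n := by
  classical
  haveI : NeZero (2 * n + 2) := ⟨by omega⟩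
  set d : Sym2 (ZMod (2 * n + 2)) := s(v, v + ((n + 1 : ℕ) : ZMod (2 * n + 2))) with hd
  -- basic val facts
  have hvlt : ∀ a : ZMod (2 * n + 2), (a - v).val < 2 * n + 2 := fun a => ZMod.val_lt _
  have hsub : ∀ x y : ZMod (2 * n + 2),
      (y - x).val = (2 * n + 2 + (y - v).val - (x - v).val) % (2 * n + 2) := by
    intro x y
    have h : y - x = (y - v) - (x - v) := by ring
    rw [h, zsub_val]
  have hveq : ∀ a b : ZMod (2 * n + 2), (a - v).val = (b - v).val → a = b := by
    intro a b h
    have := ZMod.val_injective _ h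
    exact sub_left_injective this
  have hval_to_eq : ∀ (a : ZMod (2 * n + 2)) (k : ℕ),
      (a - v).val = k → a = v + (k : ZMod (2 * n + 2)) := by
    intro a k h
    have h1 : a - v = (k : ZMod (2 * n + 2)) := by
      rw [← h, ZMod.natCast_zmod_val]
    rw [← h1]
    ring
  have hv0 : (v - v).val = 0 := by simp
  have hv1 : ((v + ((n + 1 : ℕ) : ZMod (2 * n + 2))) - v).val = n + 1 := by
    rw [add_sub_cancel_left, ZMod.val_natCast, Nat.mod_eq_of_lt (by omega)]
  have hthsub : ∀ a : ZMod (2 * n + 2),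
      (theta n a - v) = (a - v) + ((n + 1 : ℕ) : ZMod (2 * n + 2)) := by
    intro a
    show (a + ((n + 1 : ℕ) : ZMod (2 * n + 2))) - v = _
    ring
  have hthv : ∀ a : ZMod (2 * n + 2), (theta n a - v).val =
      if (a - v).val ≤ n then (a - v).val + (n + 1) else (a - v).val - (n + 1) := by
    intro a
    rw [hthsub a, ZMod.val_add, ZMod.val_natCast,
      Nat.mod_eq_of_lt (show n + 1 < 2 * n + 2 by omega)]
    have hlt := hvlt a
    split_ifs with h
    · exact Nat.mod_eq_of_lt (by omega)
    · have h2 : (a - v).val + (n + 1) = ((a - v).val - (n + 1)) + (2 * n + 2) * 1 := by omega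
      rw [h2, Nat.add_mul_mod_self_left, Nat.mod_eq_of_lt (by omega)]
  have hres1 : ∀ a : ZMod (2 * n + 2), (a - v).val ≤ n + 1 →
      res n v a = (((a - v).val : ℕ) : ZMod (n + 3)) := by
    intro a h; unfold res; rw [if_pos h]
  have hres2 : ∀ a : ZMod (2 * n + 2), n + 2 ≤ (a - v).val →
      res n v a = ((n + 2 : ℕ) : ZMod (n + 3)) := by
    intro a h; unfold res; rw [if_neg (by omega)]
  have hsmall : ∀ i k : ℕ, i ≤ n + 1 → k ≤ n + 1 →
      ((k : ZMod (n + 3)) - (i : ZMod (n + 3))).val = (n + 3 + k - i) % (n + 3) := by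
    intro i k hi hk
    rw [zsub_val, ZMod.val_natCast, ZMod.val_natCast,
      Nat.mod_eq_of_lt (show i < n + 3 by omega), Nat.mod_eq_of_lt (show k < n + 3 by omega)]
  have hsmallinj : ∀ i k : ℕ, i ≤ n + 2 → k ≤ n + 2 →
      (i : ZMod (n + 3)) = (k : ZMod (n + 3)) → i = k := by
    intro i k hi hk h
    have h2 := congrArg ZMod.val h
    rw [ZMod.val_natCast, ZMod.val_natCast, Nat.mod_eq_of_lt (by omega),
      Nat.mod_eq_of_lt (by omega)] at h2
    exact h2
  have hsucc : ∀ a b : ZMod (2 * n + 2), (b - v).val = (a - v).val + 1 → b = a + 1 := by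
    intro a b h
    apply hveq
    have h1 : (a + 1) - v = (a - v) + ((1 : ℕ) : ZMod (2 * n + 2)) := by push_cast; ring
    rw [h, h1, ZMod.val_add, ZMod.val_natCast,
      Nat.mod_eq_of_lt (show 1 < 2 * n + 2 by omega)]
    have := hvlt a
    have hb := hvlt b
    rw [h] at hb
    exact (Nat.mod_eq_of_lt (by omega)).symm
  -- crossing with the diameter
  have crossd : ∀ a b : ZMod (2 * n + 2), s(a, b) ∈ T → 1 ≤ (a - v).val →
      (a - v).val ≤ n → n + 2 ≤ (b - v).val → False := by
    intro a b hT h1 h2 h3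
    have hne : d ≠ s(a, b) := by
      intro h
      rcases Sym2.eq_iff.mp h with ⟨h4, h5⟩ | ⟨h4, h5⟩
      · have : (a - v).val = 0 := by rw [← h4]; simp
        omega
      · have : (b - v).val = 0 := by rw [← h4]; simp
        omega
    apply hnc d hv _ hT hne
    refine ⟨v, v + ((n + 1 : ℕ) : ZMod (2 * n + 2)), a, b, rfl, rfl, ?_, ?_⟩
    · constructor
      · omega
      · rw [hv1]; omega
    · have e1 : (b - (v + ((n + 1 : ℕ) : ZMod (2 * n + 2)))).val = (b - v).val - (n + 1) := by
        rw [hsub, hv1]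
        have := hvlt b
        have h4 : 2 * n + 2 + (b - v).val - (n + 1) =
            ((b - v).val - (n + 1)) + (2 * n + 2) * 1 := by omega
        rw [h4, Nat.add_mul_mod_self_left, Nat.mod_eq_of_lt (by omega)]
      have e2 : (v - (v + ((n + 1 : ℕ) : ZMod (2 * n + 2)))).val = n + 1 := by
        rw [hsub, hv0, hv1]
        have h4 : 2 * n + 2 + 0 - (n + 1) = n + 1 := by omega
        rw [h4, Nat.mod_eq_of_lt (by omega)]
      constructor
      · rw [e1]; have := hvlt b; omega
      · rw [e1, e2]; have := hvlt b; omega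
  -- the Left predicate
  set L : Sym2 (ZMod (2 * n + 2)) → Prop := fun τ => ∀ x ∈ τ, (x - v).val ≤ n + 1 with hL
  have hLpair : ∀ a b : ZMod (2 * n + 2),
      L s(a, b) ↔ (a - v).val ≤ n + 1 ∧ (b - v).val ≤ n + 1 := by
    intro a b
    constructor
    · intro h
      exact ⟨h a (by simp), h b (by simp)⟩
    · rintro ⟨h1, h2⟩ x hx
      rcases Sym2.mem_iff.mp hx with rfl | rfl
      · exact h1
      · exact h2
  have hLd : L d := by
    rw [hd, hLpair]
    rw [hv0, hv1]
    omega
  have hbig : ∀ τ ∈ T, ¬ L τ → ∃ a b : ZMod (2 * n + 2),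
      τ = s(a, b) ∧ n + 2 ≤ (b - v).val := by
    intro τ hτ hnl
    obtain ⟨a, b, rfl, -, -, -⟩ := hdiag τ hτ
    rw [hLpair] at hnl
    rcases (by omega : n + 2 ≤ (a - v).val ∨ n + 2 ≤ (b - v).val ∨
        ((a - v).val ≤ n + 1 ∧ (b - v).val ≤ n + 1)) with h | h | h
    · exact ⟨b, a, Sym2.eq_swap.symm, h⟩
    · exact ⟨a, b, rfl, h⟩
    · exact absurd h hnl
  have hstar : ((n + 2 : ℕ) : ZMod (n + 3)) + 1 = 0 := by
    have : ((n + 2 : ℕ) : ZMod (n + 3)) + 1 = ((n + 3 : ℕ) : ZMod (n + 3)) := by push_cast; ring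
    rw [this, ZMod.natCast_self]
  have hRightNotDiag : ∀ a b : ZMod (2 * n + 2), s(a, b) ∈ T → n + 2 ≤ (b - v).val →
      ¬ IsDiagonal (n + 3) (Sym2.map (res n v) s(a, b)) := by
    intro a b hT hb
    rw [Sym2.map_pair_eq, hres2 b hb]
    rcases (by omega : (1 ≤ (a - v).val ∧ (a - v).val ≤ n) ∨ (a - v).val = 0 ∨
        (a - v).val = n + 1 ∨ n + 2 ≤ (a - v).val) with h | h | h | h
    · exact absurd (crossd a b hT h.1 h.2 hb) (by simp)
    · rw [hres1 a (by omega), h]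
      rw [isDiagonal_pair]
      rintro ⟨-, -, h3⟩
      apply h3
      rw [Nat.cast_zero, ← hstar]
    · rw [hres1 a (by omega), h]
      rw [isDiagonal_pair]
      rintro ⟨-, h2, -⟩
      apply h2
      push_cast
      ring
    · rw [hres2 a h]
      rw [isDiagonal_pair]
      rintro ⟨h1, -, -⟩
      exact h1 rfl
  have hLeftDiag : ∀ a b : ZMod (2 * n + 2), s(a, b) ∈ T →
      (a - v).val ≤ n + 1 → (b - v).val ≤ n + 1 →
      IsDiagonal (n + 3) (Sym2.map (res n v) s(a, b)) := by
    intro a b hT ha hb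
    obtain ⟨hne, hadj1, hadj2⟩ := (isDiagonal_pair a b).mp (hdiag _ hT)
    rw [Sym2.map_pair_eq, hres1 a ha, hres1 b hb, isDiagonal_pair]
    refine ⟨?_, ?_, ?_⟩
    · intro h
      exact hne (hveq a b (hsmallinj _ _ (by omega) (by omega) h))
    · intro h
      apply hadj1
      apply hsucc
      have h2 : (((a - v).val + 1 : ℕ) : ZMod (n + 3)) = ((a - v).val : ℕ) + 1 := by push_cast; ring
      exact hsmallinj _ _ (by omega) (by omega) (h.trans h2.symm)
    · intro h
      apply hadj2
      apply hsucc
      have h2 : (((b - v).val + 1 : ℕ) : ZMod (n + 3)) = ((b - v).val : ℕ) + 1 := by push_cast; ring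
      exact hsmallinj _ _ (by omega) (by omega) (h.trans h2.symm)
  -- theta as involution on T
  have hTmem : ∀ τ ∈ T, Sym2.map (theta n) τ ∈ T := by
    intro τ h
    rw [← hinv]
    exact Finset.mem_image_of_mem _ h
  have hthid : ∀ c : ZMod (2 * n + 2), theta n (theta n c) = c := by
    intro c
    show (c + _) + _ = c
    rw [add_assoc, ← Nat.cast_add]
    have h : (n + 1) + (n + 1) = 2 * n + 2 := by ring
    rw [h, ZMod.natCast_self, add_zero]
  have hthth : ∀ τ : Sym2 (ZMod (2 * n + 2)),
      Sym2.map (theta n) (Sym2.map (theta n) τ) = τ := by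
    intro τ
    induction τ using Sym2.ind with
    | _ a b => rw [Sym2.map_pair_eq, Sym2.map_pair_eq, hthid, hthid]
  have hntriv : ((n + 1 : ℕ) : ZMod (2 * n + 2)) ≠ 0 := by
    intro h
    have h2 := congrArg ZMod.val h
    rw [ZMod.val_natCast, Nat.mod_eq_of_lt (by omega), ZMod.val_zero] at h2
    omega
  have hdiam : ∀ a b : ZMod (2 * n + 2), s(a, b) ∈ T →
      b = a + ((n + 1 : ℕ) : ZMod (2 * n + 2)) → s(a, b) = d := by
    intro a b hT hab
    have hVb : (b - v).val = if (a - v).val ≤ n then (a - v).val + (n + 1)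
        else (a - v).val - (n + 1) := by
      rw [hab]; exact hthv a
    have hlt := hvlt a
    rcases (by omega : ((a - v).val = 0) ∨ (1 ≤ (a - v).val ∧ (a - v).val ≤ n) ∨
        ((a - v).val = n + 1) ∨ (n + 2 ≤ (a - v).val)) with h | h | h | h
    · have ha : a = v := by
        have := hval_to_eq a 0 h
        simpa using this
      have hb : (b - v).val = n + 1 := by rw [hVb, if_pos (by omega)]; omega
      have hbv : b = v + ((n + 1 : ℕ) : ZMod (2 * n + 2)) := hval_to_eq b _ hb
      rw [ha, hbv, hd]
    · have hb : n + 2 ≤ (b - v).val := by rw [hVb, if_pos (by omega)]; omega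
      exact absurd (crossd a b hT h.1 h.2 hb) (by simp)
    · have ha : a = v + ((n + 1 : ℕ) : ZMod (2 * n + 2)) := hval_to_eq a _ h
      have hb : (b - v).val = 0 := by rw [hVb, if_neg (by omega), h]; omega
      have hbv : b = v := by
        have := hval_to_eq b 0 hb
        simpa using this
      rw [ha, hbv, hd, Sym2.eq_swap]
    · have hb : 1 ≤ (b - v).val ∧ (b - v).val ≤ n := by
        constructor
        · rw [hVb, if_neg (by omega)]
          omega
        · rw [hVb, if_neg (by omega)]
          omega
      have hT2 : s(b, a) ∈ T := by rw [Sym2.eq_swap]; exact hT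
      exact absurd (crossd b a hT2 hb.1 hb.2 h) (by simp)
  have hfix : ∀ τ ∈ T, Sym2.map (theta n) τ = τ → τ = d := by
    intro τ hτ hfx
    obtain ⟨a, b, rfl, -, -, -⟩ := hdiag τ hτ
    rw [Sym2.map_pair_eq] at hfx
    rcases Sym2.eq_iff.mp hfx with ⟨h1, h2⟩ | ⟨h1, h2⟩
    · exfalso
      apply hntriv
      have : a + ((n + 1 : ℕ) : ZMod (2 * n + 2)) = a := h1
      linear_combination this
    · exact hdiam a b hτ h1.symm
  have hLtoR : ∀ τ ∈ T, τ ≠ d → L τ → ¬ L (Sym2.map (theta n) τ) := by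
    intro τ hτ hne hLτ hL2
    obtain ⟨a, b, rfl, hab, -, -⟩ := hdiag τ hτ
    rw [hLpair] at hLτ
    rw [Sym2.map_pair_eq, hLpair, hthv, hthv] at hL2
    have hV : (a - v).val ≠ (b - v).val := fun h => hab (hveq a b h)
    have ha2 : (a - v).val = 0 ∨ (a - v).val = n + 1 := by
      rcases hL2 with ⟨h1, -⟩
      split_ifs at h1 <;> omega
    have hb2 : (b - v).val = 0 ∨ (b - v).val = n + 1 := by
      rcases hL2 with ⟨-, h1⟩
      split_ifs at h1 <;> omega
    apply hne
    rcases ha2 with ha2 | ha2 <;> rcases hb2 with hb2 | hb2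
    · omega
    · have hav : a = v := by simpa using hval_to_eq a 0 ha2
      have hbv : b = v + ((n + 1 : ℕ) : ZMod (2 * n + 2)) := hval_to_eq b _ hb2
      rw [hav, hbv, hd]
    · have hbv : b = v := by simpa using hval_to_eq b 0 hb2
      have hav : a = v + ((n + 1 : ℕ) : ZMod (2 * n + 2)) := hval_to_eq a _ ha2
      rw [hav, hbv, hd, Sym2.eq_swap]
    · omega
  have hRtoL : ∀ τ ∈ T, ¬ L τ → L (Sym2.map (theta n) τ) := by
    intro τ hτ hnl
    obtain ⟨a, b, rfl, hb⟩ := hbig τ hτ hnl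
    have hltb := hvlt b
    have hlta := hvlt a
    rw [Sym2.map_pair_eq, hLpair, hthv, hthv]
    have hbside : (if (b - v).val ≤ n then (b - v).val + (n + 1)
        else (b - v).val - (n + 1)) ≤ n + 1 := by
      rw [if_neg (by omega)]; omega
    refine ⟨?_, hbside⟩
    rcases (by omega : ((a - v).val = 0) ∨ (1 ≤ (a - v).val ∧ (a - v).val ≤ n) ∨
        ((a - v).val = n + 1) ∨ (n + 2 ≤ (a - v).val)) with h | h | h | h
    · rw [if_pos (by omega)]; omega
    · exact absurd (crossd a b hτ h.1 h.2 hb) (by simp)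
    · rw [if_neg (by omega)]; omega
    · rw [if_neg (by omega)]; omega
  -- cardinality of the left part
  have hdfix : Sym2.map (theta n) d = d := by
    rw [hd, Sym2.map_pair_eq]
    have h1 : theta n v = v + ((n + 1 : ℕ) : ZMod (2 * n + 2)) := rfl
    have h2 : theta n (v + ((n + 1 : ℕ) : ZMod (2 * n + 2))) = v := by
      have := hthid v
      rw [h1] at this
      exact this
    rw [h1, h2, Sym2.eq_swap]
  have hdleft : d ∈ T.filter L := Finset.mem_filter.mpr ⟨hv, hLd⟩
  have hcb : ((T.filter L).erase d).card = (T.filter (fun τ => ¬ L τ)).card := by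
    apply Finset.card_nbij' (i := Sym2.map (theta n)) (j := Sym2.map (theta n))
    · intro τ hτ
      rw [Finset.mem_coe, Finset.mem_erase, Finset.mem_filter] at hτ
      rw [Finset.mem_coe, Finset.mem_filter]
      exact ⟨hTmem τ hτ.2.1, hLtoR τ hτ.2.1 hτ.1 hτ.2.2⟩
    · intro σ hσ
      rw [Finset.mem_coe, Finset.mem_filter] at hσ
      rw [Finset.mem_coe, Finset.mem_erase, Finset.mem_filter]
      refine ⟨?_, hTmem σ hσ.1, hRtoL σ hσ.1 hσ.2⟩
      intro h
      apply hσ.2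
      have : σ = d := by
        have h2 := congrArg (Sym2.map (theta n)) h
        rw [hthth, hdfix] at h2
        exact h2
      rw [this]
      exact hLd
    · intro τ _
      exact hthth τ
    · intro τ _
      exact hthth τ
  have hcount : (T.filter L).card + (T.filter (fun τ => ¬ L τ)).card = T.card :=
    Finset.card_filter_add_card_filter_not L
  have hcerase : ((T.filter L).erase d).card = (T.filter L).card - 1 :=
    Finset.card_erase_of_mem hdleft
  have hcardIn : 1 ≤ (T.filter L).card := Finset.card_pos.mpr ⟨d, hdleft⟩
  have hLcard : (T.filter L).card = n := by omega
  -- injectivity of res on the left side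
  have hresinj : ∀ a c : ZMod (2 * n + 2), (a - v).val ≤ n + 1 → (c - v).val ≤ n + 1 →
      res n v a = res n v c → a = c := by
    intro a c ha hc h
    rw [hres1 a ha, hres1 c hc] at h
    exact hveq a c (hsmallinj _ _ (by omega) (by omega) h)
  -- membership characterization
  have hmem : ∀ q : Sym2 (ZMod (n + 3)),
      ((∃ τ ∈ T, q = Sym2.map (res n v) τ) ∧ IsDiagonal (n + 3) q) ↔
      ∃ τ ∈ T.filter L, q = Sym2.map (res n v) τ := by
    intro q
    constructor
    · rintro ⟨⟨τ, hτ, rfl⟩, hq⟩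
      by_cases hLτ : L τ
      · exact ⟨τ, Finset.mem_filter.mpr ⟨hτ, hLτ⟩, rfl⟩
      · obtain ⟨a, b, rfl, hb⟩ := hbig τ hτ hLτ
        exact absurd hq (hRightNotDiag a b hτ hb)
    · rintro ⟨τ, hτ, rfl⟩
      rw [Finset.mem_filter] at hτ
      refine ⟨⟨τ, hτ.1, rfl⟩, ?_⟩
      obtain ⟨a, b, rfl, -, -, -⟩ := hdiag τ hτ.1
      have hab := (hLpair a b).mp hτ.2
      exact hLeftDiag a b hτ.1 hab.1 hab.2
  -- betweenness transfer
  have hbtwT : ∀ a c b : ZMod (2 * n + 2), (a - v).val ≤ n + 1 → (c - v).val ≤ n + 1 →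
      (b - v).val ≤ n + 1 →
      StrictBtw (n + 3) (res n v a) (res n v c) (res n v b) →
      StrictBtw (2 * n + 2) a c b := by
    intro a c b ha hc hb h
    obtain ⟨h1, h2⟩ := h
    rw [hres1 a ha, hres1 c hc] at h1
    rw [hres1 a ha, hres1 c hc, hres1 b hb] at h2
    rw [hsmall _ _ ha hc] at h1
    rw [hsmall _ _ ha hc, hsmall _ _ ha hb] at h2
    rw [modh (by omega) (by omega)] at h1
    rw [modh (by omega) (by omega), modh (by omega) (by omega)] at h2
    constructor
    · rw [hsub a c, modh (hvlt a) (hvlt c)]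
      split_ifs at h1 ⊢ <;> omega
    · rw [hsub a c, hsub a b, modh (hvlt a) (hvlt c), modh (hvlt a) (hvlt b)]
      split_ifs at h2 ⊢ <;> omega
  -- crossing transfer
  have hcross : ∀ a b c e : ZMod (2 * n + 2), (a - v).val ≤ n + 1 → (b - v).val ≤ n + 1 →
      (c - v).val ≤ n + 1 → (e - v).val ≤ n + 1 →
      Cross (n + 3) (Sym2.map (res n v) s(a, b)) (Sym2.map (res n v) s(c, e)) →
      Cross (2 * n + 2) s(a, b) s(c, e) := by
    intro a b c e ha hb hc he hcr
    rw [Sym2.map_pair_eq, Sym2.map_pair_eq] at hcr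
    obtain ⟨x, y, z, w, h1, h2, hb1, hb2⟩ := hcr
    rcases Sym2.eq_iff.mp h1 with ⟨hx, hy⟩ | ⟨hx, hy⟩ <;>
      rcases Sym2.eq_iff.mp h2 with ⟨hz, hw⟩ | ⟨hz, hw⟩ <;> subst hx <;> subst hy <;>
      subst hz <;> subst hw
    · exact ⟨a, b, c, e, rfl, rfl, hbtwT a c b ha hc hb hb1, hbtwT b e a hb he ha hb2⟩
    · exact ⟨a, b, e, c, rfl, Sym2.eq_swap, hbtwT a e b ha he hb hb1,
        hbtwT b c a hb hc ha hb2⟩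
    · exact ⟨b, a, c, e, Sym2.eq_swap, rfl, hbtwT b c a hb hc ha hb1,
        hbtwT a e b ha he hb hb2⟩
    · exact ⟨b, a, e, c, Sym2.eq_swap, Sym2.eq_swap, hbtwT b e a hb he ha hb1,
        hbtwT a c b ha hc hb hb2⟩
  constructor
  · -- non-crossing
    rintro p hp q hq hne hcr
    rw [Set.mem_setOf_eq, hmem] at hp hq
    obtain ⟨τ, hτ, rfl⟩ := hp
    obtain ⟨σ, hσ, rfl⟩ := hq
    rw [Finset.mem_filter] at hτ hσ
    obtain ⟨a, b, rfl, -, -, -⟩ := hdiag τ hτ.1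
    obtain ⟨c, e, rfl, -, -, -⟩ := hdiag σ hσ.1
    have hab := (hLpair a b).mp hτ.2
    have hce := (hLpair c e).mp hσ.2
    have hτσ : s(a, b) ≠ s(c, e) := by
      intro h
      exact hne (by rw [h])
    exact hnc _ hτ.1 _ hσ.1 hτσ
      (hcross a b c e hab.1 hab.2 hce.1 hce.2 hcr)
  · -- cardinality
    have hSeq : {q : Sym2 (ZMod (n + 3)) |
        (∃ τ ∈ T, q = Sym2.map (res n v) τ) ∧ IsDiagonal (n + 3) q} =
        ↑((T.filter L).image (Sym2.map (res n v))) := by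
      ext q
      rw [Set.mem_setOf_eq, hmem, Finset.coe_image, Set.mem_image]
      constructor
      · rintro ⟨τ, hτ, rfl⟩
        exact ⟨τ, hτ, rfl⟩
      · rintro ⟨τ, hτ, rfl⟩
        exact ⟨τ, hτ, rfl⟩
    rw [hSeq, Set.ncard_coe_finset]
    rw [Finset.card_image_of_injOn, hLcard]
    intro τ hτ σ hσ h
    rw [Finset.mem_coe, Finset.mem_filter] at hτ hσ
    obtain ⟨a, b, rfl, -, -, -⟩ := hdiag τ hτ.1
    obtain ⟨c, e, rfl, -, -, -⟩ := hdiag σ hσ.1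
    have hab := (hLpair a b).mp hτ.2
    have hce := (hLpair c e).mp hσ.2
    rw [Sym2.map_pair_eq, Sym2.map_pair_eq] at h
    rcases Sym2.eq_iff.mp h with ⟨h1, h2⟩ | ⟨h1, h2⟩
    · rw [hresinj a c hab.1 hce.1 h1, hresinj b e hab.2 hce.2 h2]
    · rw [hresinj a e hab.1 hce.2 h1, hresinj b c hab.2 hce.1 h2, Sym2.eq_swap]
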